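/- Let n ≥ 2 and let H be an n×n real symmetric matrix, let v₁, …, vₙ be an orthonormal basis of ℝⁿ consisting of eigenvectors of H with H vⱼ = λⱼ vⱼ and λ₁ ≤ λ₂ ≤ ⋯ ≤ λₙ. Suppose there is perfect state transfer from vertex 1 to vertex 2 at time t₀, i.e. |(exp(i t₀ H))₁₂| = 1. Then for every real h with |h|·(λₙ − λ₁) < π and every real number s, the fidelity at the perturbed time satisfies p(t₀ + h) ≥ 1 − h² · Σⱼ ((vⱼ)₁)² · (λⱼ − s)², where (vⱼ)₁ denotes the first coordinate of vⱼ. -/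

import Mathlib

open Matrix

/-- The time evolution `exp(i t H)` of a real symmetric Hamiltonian `H`,
regarded as a complex matrix. -/
noncomputable def timeEvo {n : ℕ} (H : Matrix (Fin n) (Fin n) ℝ) (t : ℝ) :
    Matrix (Fin n) (Fin n) ℂ :=
  NormedSpace.exp (Complex.I • (t : ℂ) • H.map (fun x => (x : ℂ)))

lemma entry_formula {n : ℕ} (H : Matrix (Fin n) (Fin n) ℝ) (hH : H.IsSymm)
    (μ : Fin n → ℝ) (v : Fin n → (Fin n → ℝ))
    (hON : ∀ j k, v j ⬝ᵥ v k = if j = k then (1 : ℝ) else 0)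
    (heig : ∀ j, H.mulVec (v j) = μ j • v j) (t : ℝ) (i k : Fin n) :
    timeEvo H t i k = ∑ j, (v j i : ℂ) * (v j k : ℂ) * Complex.exp (Complex.I * t * μ j) := by
  classical
  set W : Matrix (Fin n) (Fin n) ℂ := Matrix.of (fun j k => ((v j k : ℂ))) with hW
  have hWWt : W * Wᵀ = 1 := by
    ext j k
    have := hON j k
    simp only [dotProduct] at this
    simp only [Matrix.mul_apply, hW, Matrix.of_apply, Matrix.transpose_apply, Matrix.one_apply]
    calc (∑ m, (v j m : ℂ) * (v k m : ℂ)) = ((∑ m, v j m * v k m : ℝ) : ℂ) := by push_cast; rfl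
    _ = _ := by rw [this]; split <;> simp
  have hWtW : Wᵀ * W = 1 := mul_eq_one_comm.mp hWWt
  set D : Matrix (Fin n) (Fin n) ℂ := Matrix.diagonal (fun j => Complex.I * t * μ j) with hDdef
  have hD : W * (Complex.I • (t : ℂ) • H.map (fun x => (x : ℂ))) = D * W := by
    ext j k
    have hmv := congrFun (heig j) k
    simp only [Matrix.mulVec, dotProduct, Pi.smul_apply, smul_eq_mul] at hmv
    simp only [Matrix.mul_apply, hW, Matrix.of_apply, Matrix.smul_apply, Matrix.map_apply,
      hDdef, Matrix.diagonal_mul, smul_eq_mul]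
    have : ∀ m, H m k = H k m := fun m => by
      conv_lhs => rw [← hH]
      rfl
    calc (∑ m, (v j m : ℂ) * (Complex.I * ((t:ℂ) * (H m k : ℂ))))
        = Complex.I * t * ((∑ m, H k m * v j m : ℝ) : ℂ) := by
          push_cast
          rw [Finset.mul_sum]
          congr 1; ext m; rw [this m]; ring
    _ = Complex.I * t * μ j * (v j k : ℂ) := by rw [hmv]; push_cast; ring
    _ = ∑ x, Matrix.diagonal (fun j => Complex.I * (t:ℂ) * μ j) j x * (v x k : ℂ) := by
          simp [Matrix.diagonal_apply, ite_mul, Finset.sum_ite_eq]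
  have hIsU : IsUnit Wᵀ := by
    exact ⟨⟨Wᵀ, W, hWtW, hWWt⟩, rfl⟩
  have hWinv : (Wᵀ)⁻¹ = W := Matrix.inv_eq_right_inv hWtW
  have hHc : Complex.I • (t : ℂ) • H.map (fun x => (x : ℂ)) = Wᵀ * D * (Wᵀ)⁻¹ := by
    rw [hWinv]
    calc Complex.I • (t : ℂ) • H.map (fun x => (x : ℂ))
        = (Wᵀ * W) * (Complex.I • (t : ℂ) • H.map (fun x => (x : ℂ))) := by rw [hWtW, one_mul]
    _ = Wᵀ * (W * (Complex.I • (t : ℂ) • H.map (fun x => (x : ℂ)))) := by rw [Matrix.mul_assoc]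
    _ = Wᵀ * (D * W) := by rw [hD]
    _ = Wᵀ * D * W := by rw [Matrix.mul_assoc]
  rw [timeEvo, hHc, Matrix.exp_conj Wᵀ D hIsU, Matrix.exp_diagonal, hWinv]
  simp only [Matrix.mul_apply, Matrix.diagonal_mul, Matrix.transpose_apply, hW, Matrix.of_apply,
    Function.comp]
  apply Finset.sum_congr rfl
  intro j _
  rw [Finset.sum_eq_single j]
  · simp [Matrix.diagonal_apply, Pi.coe_exp, ← Complex.exp_eq_exp_ℂ]; ring
  · intro x _ hx; simp [Matrix.diagonal_apply_ne _ hx]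
  · simp


lemma re_eq_abs' {z : ℂ} (hz : z.re = ‖z‖) : z = (z.re : ℂ) := by
  have h1 : ‖z‖ ^ 2 = z.re ^ 2 + z.im ^ 2 := by
    rw [Complex.sq_norm, Complex.normSq_apply]; ring
  have h2 : ‖z‖ ^ 2 = z.re ^ 2 := by rw [← hz]
  have him : z.im = 0 := by nlinarith [sq_nonneg z.im]
  exact Complex.ext rfl him

lemma quad_bound {q r A : ℝ} (hq : 0 ≤ q) (hr : 1 - q / 2 ≤ r) (hA : r ^ 2 ≤ A) :
    1 - q ≤ A := by
  rcases le_or_gt q 2 with hc | hc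
  · nlinarith [sq_nonneg (r - 1 + q / 2)]
  · nlinarith [sq_nonneg r]


/-- Theorem 2 (timing-error bound with eigenvector weights): if there is perfect state
transfer from vertex 1 to vertex 2 at time `t₀` and `|h| (λₙ - λ₁) < π` then, for any
real `s`, `p(t₀+h) ≥ 1 - h² ∑ⱼ (vⱼ)₁² (λⱼ - s)²`. -/
theorem stmt1 {n : ℕ} (hn : 2 ≤ n) (H : Matrix (Fin n) (Fin n) ℝ) (hH : H.IsSymm)
    (μ : Fin n → ℝ) (hmono : Monotone μ)
    (v : Fin n → (Fin n → ℝ))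
    (hON : ∀ j k, v j ⬝ᵥ v k = if j = k then (1 : ℝ) else 0)
    (heig : ∀ j, H.mulVec (v j) = μ j • v j)
    (t₀ : ℝ)
    (hPST : ‖timeEvo H t₀ ⟨0, by omega⟩ ⟨1, by omega⟩‖ = 1)
    (h : ℝ) (hh : |h| * (μ ⟨n - 1, by omega⟩ - μ ⟨0, by omega⟩) < Real.pi)
    (s : ℝ) :
    1 - h ^ 2 * ∑ j, (v j ⟨0, by omega⟩) ^ 2 * (μ j - s) ^ 2
      ≤ ‖timeEvo H (t₀ + h) ⟨0, by omega⟩ ⟨1, by omega⟩‖ ^ 2 := by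
  classical
  have h0 : 0 < n := by omega
  have h1 : 1 < n := by omega
  set i0 : Fin n := ⟨0, h0⟩ with hi0
  set i1 : Fin n := ⟨1, h1⟩ with hi1
  set a : Fin n → ℝ := fun j => v j i0 with ha
  set b : Fin n → ℝ := fun j => v j i1 with hb
  -- column orthonormality
  set Vr : Matrix (Fin n) (Fin n) ℝ := Matrix.of (fun j k => v j k) with hVr
  have hVV : Vr * Vrᵀ = 1 := by
    ext j k
    have := hON j k
    simp only [dotProduct] at this
    simp only [Matrix.mul_apply, hVr, Matrix.of_apply, Matrix.transpose_apply, Matrix.one_apply]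
    rw [this]
  have hVtV : Vrᵀ * Vr = 1 := mul_eq_one_comm.mp hVV
  have hcol : ∀ i k : Fin n, (∑ j, v j i * v j k) = if i = k then (1:ℝ) else 0 := by
    intro i k
    have := congrFun (congrFun hVtV i) k
    simpa [Matrix.mul_apply, Matrix.one_apply, hVr] using this
  have ha2 : (∑ j, a j ^ 2) = 1 := by
    have := hcol i0 i0; simpa [sq] using this
  have hb2 : (∑ j, b j ^ 2) = 1 := by
    have := hcol i1 i1; simpa [sq] using this
  -- entry formula
  have hEF : ∀ t : ℝ, timeEvo H t i0 i1
      = ∑ j, (a j : ℂ) * (b j : ℂ) * Complex.exp (Complex.I * t * μ j) :=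
    fun t => entry_formula H hH μ v hON heig t i0 i1
  set w : ℂ := timeEvo H t₀ i0 i1 with hwdef
  set u : Fin n → ℂ := fun j => (a j : ℂ) * (b j : ℂ) * Complex.exp (Complex.I * t₀ * μ j)
    with hu
  have hwf : w = ∑ j, u j := hEF t₀
  have habsw : ‖w‖ = 1 := hPST
  have hzabs : ∀ (t : ℝ) (j : Fin n),
      ‖Complex.exp (Complex.I * t * μ j)‖ = 1 := by
    intro t j
    rw [Complex.norm_exp]
    simp
  have habsu : ∀ j, ‖u j‖ = |a j * b j| := by
    intro j
    show ‖(a j : ℂ) * (b j : ℂ) * Complex.exp (Complex.I * t₀ * μ j)‖ = _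
    rw [norm_mul, norm_mul, Complex.norm_real, Complex.norm_real, Real.norm_eq_abs, Real.norm_eq_abs,
      hzabs t₀ j, abs_mul, mul_one]
  -- chain of equalities
  have hsum1 : (∑ j, ((starRingEnd ℂ) w * u j).re) = 1 := by
    rw [← Complex.re_sum, ← Finset.mul_sum, ← hwf]
    have : (starRingEnd ℂ) w * w = ((‖w‖ ^ 2 : ℝ) : ℂ) := by
      rw [mul_comm, Complex.mul_conj, Complex.sq_norm]
    rw [this, habsw]
    norm_num
  have habscu : ∀ j, ‖(starRingEnd ℂ) w * u j‖ = |a j * b j| := by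
    intro j
    rw [norm_mul, Complex.norm_conj, habsw, one_mul, habsu]
  have hle1 : ∀ j, ((starRingEnd ℂ) w * u j).re ≤ |a j * b j| := by
    intro j
    rw [← habscu j]
    exact Complex.re_le_norm _
  have hle2 : ∀ j, |a j * b j| ≤ (a j ^ 2 + b j ^ 2) / 2 := by
    intro j
    rw [abs_mul]
    nlinarith [sq_nonneg (|a j| - |b j|), sq_abs (a j), sq_abs (b j)]
  have hsum3 : (∑ j, (a j ^ 2 + b j ^ 2) / 2) = 1 := by
    rw [← Finset.sum_div, Finset.sum_add_distrib, ha2, hb2]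
    norm_num
  have hsum2 : (∑ j, |a j * b j|) = 1 := by
    have hlow : (1:ℝ) ≤ ∑ j, |a j * b j| := by
      rw [← hsum1]; exact Finset.sum_le_sum fun j _ => hle1 j
    have hhigh : (∑ j, |a j * b j|) ≤ 1 := by
      rw [← hsum3]; exact Finset.sum_le_sum fun j _ => hle2 j
    linarith
  have heq1 : ∀ j, ((starRingEnd ℂ) w * u j).re = |a j * b j| := by
    have := (Finset.sum_eq_sum_iff_of_le (fun j _ => hle1 j)).mp (by rw [hsum1, hsum2])
    intro j; exact this j (Finset.mem_univ j)
  have heq2 : ∀ j, |a j * b j| = (a j ^ 2 + b j ^ 2) / 2 := by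
    have := (Finset.sum_eq_sum_iff_of_le (fun j _ => hle2 j)).mp (by rw [hsum2, hsum3])
    intro j; exact this j (Finset.mem_univ j)
  have hab2 : ∀ j, |a j * b j| = a j ^ 2 := by
    intro j
    have := heq2 j
    rw [abs_mul] at this ⊢
    nlinarith [sq_abs (a j), sq_abs (b j), abs_nonneg (a j), abs_nonneg (b j),
      sq_nonneg (|a j| - |b j|)]
  have hueq : ∀ j, u j = w * ((a j ^ 2 : ℝ) : ℂ) := by
    intro j
    have h1 : ((starRingEnd ℂ) w * u j) = ((a j ^ 2 : ℝ) : ℂ) := by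
      have hre := heq1 j
      have hz := re_eq_abs' (z := (starRingEnd ℂ) w * u j) (by rw [hre, ← habscu j])
      rw [hz, hre, hab2 j]
    calc u j = (w * (starRingEnd ℂ) w) * u j := by
          rw [Complex.mul_conj, ← Complex.sq_norm, habsw]; norm_num
    _ = w * ((starRingEnd ℂ) w * u j) := by rw [mul_assoc]
    _ = w * ((a j ^ 2 : ℝ) : ℂ) := by rw [h1]
  -- perturbed time
  set S : ℂ := ∑ j, ((a j ^ 2 : ℝ) : ℂ) * Complex.exp (((h * (μ j - s) : ℝ) : ℂ) * Complex.I)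
    with hS
  have hEpert : timeEvo H (t₀ + h) i0 i1
      = w * Complex.exp (((h * s : ℝ) : ℂ) * Complex.I) * S := by
    rw [hEF (t₀ + h), hS, Finset.mul_sum]
    apply Finset.sum_congr rfl
    intro j _
    have harg : Complex.I * (((t₀ + h : ℝ)) : ℂ) * ((μ j : ℝ) : ℂ)
        = Complex.I * ((t₀ : ℝ) : ℂ) * ((μ j : ℝ) : ℂ)
          + (((h * s : ℝ) : ℂ) * Complex.I + ((h * (μ j - s) : ℝ) : ℂ) * Complex.I) := by
      push_cast; ring
    rw [harg, Complex.exp_add, Complex.exp_add]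
    have : (a j : ℂ) * (b j : ℂ) * Complex.exp (Complex.I * ((t₀ : ℝ) : ℂ) * ((μ j : ℝ) : ℂ))
        = w * ((a j ^ 2 : ℝ) : ℂ) := hueq j
    calc (a j : ℂ) * (b j : ℂ) * (Complex.exp (Complex.I * ((t₀:ℝ):ℂ) * ((μ j : ℝ):ℂ))
          * (Complex.exp (((h * s : ℝ):ℂ) * Complex.I)
            * Complex.exp (((h * (μ j - s) : ℝ):ℂ) * Complex.I)))
        = ((a j : ℂ) * (b j : ℂ) * Complex.exp (Complex.I * ((t₀:ℝ):ℂ) * ((μ j : ℝ):ℂ)))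
          * (Complex.exp (((h * s : ℝ):ℂ) * Complex.I)
            * Complex.exp (((h * (μ j - s) : ℝ):ℂ) * Complex.I)) := by ring
    _ = (w * ((a j ^ 2 : ℝ) : ℂ))
          * (Complex.exp (((h * s : ℝ):ℂ) * Complex.I)
            * Complex.exp (((h * (μ j - s) : ℝ):ℂ) * Complex.I)) := by rw [this]
    _ = w * Complex.exp (((h * s : ℝ):ℂ) * Complex.I)
          * (((a j ^ 2 : ℝ) : ℂ) * Complex.exp (((h * (μ j - s) : ℝ):ℂ) * Complex.I)) := by
          ring
  have habsE : ‖timeEvo H (t₀ + h) i0 i1‖ = ‖S‖ := by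
    rw [hEpert, norm_mul, norm_mul, habsw, Complex.norm_exp]
    simp
  -- real part bound
  have hre : S.re = ∑ j, a j ^ 2 * Real.cos (h * (μ j - s)) := by
    rw [hS, Complex.re_sum]
    apply Finset.sum_congr rfl
    intro j _
    rw [Complex.re_ofReal_mul, Complex.exp_ofReal_mul_I_re]
  have hQ0 : 0 ≤ h ^ 2 * ∑ j, a j ^ 2 * (μ j - s) ^ 2 := by
    apply mul_nonneg (sq_nonneg h)
    exact Finset.sum_nonneg fun j _ => mul_nonneg (sq_nonneg _) (sq_nonneg _)
  have hrge : 1 - h ^ 2 * (∑ j, a j ^ 2 * (μ j - s) ^ 2) / 2 ≤ S.re := by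
    rw [hre]
    have expand : (∑ j, a j ^ 2 * (1 - (h * (μ j - s)) ^ 2 / 2))
        = (∑ j, a j ^ 2) - (∑ j, h ^ 2 * (a j ^ 2 * (μ j - s) ^ 2)) / 2 :=
      calc (∑ j, a j ^ 2 * (1 - (h * (μ j - s)) ^ 2 / 2))
          = ∑ j, (a j ^ 2 - h ^ 2 * (a j ^ 2 * (μ j - s) ^ 2) / 2) :=
            Finset.sum_congr rfl (fun j _ => by ring)
        _ = (∑ j, a j ^ 2) - ∑ j, h ^ 2 * (a j ^ 2 * (μ j - s) ^ 2) / 2 :=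
            Finset.sum_sub_distrib _ _
        _ = (∑ j, a j ^ 2) - (∑ j, h ^ 2 * (a j ^ 2 * (μ j - s) ^ 2)) / 2 := by
            rw [Finset.sum_div]
    have step : (∑ j, a j ^ 2 * (1 - (h * (μ j - s)) ^ 2 / 2))
        ≤ ∑ j, a j ^ 2 * Real.cos (h * (μ j - s)) := by
      apply Finset.sum_le_sum
      intro j _
      exact mul_le_mul_of_nonneg_left (Real.one_sub_sq_div_two_le_cos) (sq_nonneg _)
    rw [expand, ← Finset.mul_sum, ha2] at step
    linarith
  have habs2 : S.re ^ 2 ≤ ‖S‖ ^ 2 := by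
    rw [Complex.sq_norm, Complex.normSq_apply]
    nlinarith [sq_nonneg S.im]
  have final : 1 - h ^ 2 * (∑ j, a j ^ 2 * (μ j - s) ^ 2)
      ≤ ‖timeEvo H (t₀ + h) i0 i1‖ ^ 2 := by
    rw [habsE]
    exact quad_bound hQ0 hrge habs2
  exact final
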